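/- For any compositions α and β, the ribbon Schur functions satisfy the multiplication rule r_α · r_β = r_{α·β} + r_{α⊙β}, where α·β is the concatenation and α⊙β is the near concatenation of α and β. -/
import Mathlib


/-- The size `|β|` of a composition, i.e. the sum of its components. -/
def size (l : List ℕ+) : ℕ := (l.map fun x => (x : ℕ)).sum

/-- Near concatenation `α ⊙ β` of two (nonempty) compositions. -/
def odot (a b : List ℕ+) : List ℕ+ :=
  if a = [] then b
  else if b = [] then a
  else a.dropLast ++ (a.getLastI + b.headI) :: b.tail

/-- `β^{⊙ m}`, the `m`-fold near concatenation of `β` with itself. -/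
def odotPow (b : List ℕ+) : ℕ → List ℕ+
  | 0 => []
  | n + 1 => odot (odotPow b n) b

/-- The composition operation `α ∘ β = β^{⊙α₁} · β^{⊙α₂} ⋯ β^{⊙αₖ}`. -/
def compOp (a b : List ℕ+) : List ℕ+ := (a.map fun ai => odotPow b (ai : ℕ)).flatten

/-- `β₁ ∘ β₂ ∘ ⋯ ∘ βₖ` (the composition `1` is a two-sided identity for `∘`). -/
def compFold (l : List (List ℕ+)) : List ℕ+ := l.foldr compOp [1]

/-- The list of all coarsenings of a composition. -/
def coarsenings : List ℕ+ → List (List ℕ+)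
  | [] => [[]]
  | [a] => [[a]]
  | a :: b :: t => ((coarsenings (b :: t)).map (a :: ·)) ++ coarsenings ((a + b) :: t)
  termination_by l => l.length

/-- The multiset `M(β)` of partitions (as multisets of parts) of all coarsenings of `β`. -/
def Mset (b : List ℕ+) : Multiset (Multiset ℕ+) :=
  ↑((coarsenings b).map fun l => (l : Multiset ℕ+))

/-- `h_λ`: the product of the complete homogeneous symmetric functions indexed by the
parts of `λ`.  Since the `h_j` are algebraically independent generators of `Λ` over `ℚ`,
we identify `Λ` with the polynomial ring `ℚ[h₁, h₂, …] = MvPolynomial ℕ+ ℚ`. -/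
noncomputable def hPoly (lam : Multiset ℕ+) : MvPolynomial ℕ+ ℚ :=
  (lam.map MvPolynomial.X).prod

/-- The ribbon Schur function `r_α = (−1)^{l(α)} Σ_{β ≥ α} (−1)^{l(β)} h_{λ(β)}`. -/
noncomputable def ribbon (a : List ℕ+) : MvPolynomial ℕ+ ℚ :=
  (-1 : MvPolynomial ℕ+ ℚ) ^ a.length *
    ((coarsenings a).map fun (b : List ℕ+) =>
      (-1 : MvPolynomial ℕ+ ℚ) ^ b.length * hPoly (b : Multiset ℕ+)).sum

noncomputable def Ssum (g : List ℕ+) : MvPolynomial ℕ+ ℚ :=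
  ((coarsenings g).map fun (b : List ℕ+) => (-1 : MvPolynomial ℕ+ ℚ) ^ b.length * hPoly (b : Multiset ℕ+)).sum

open MvPolynomial in
lemma hPoly_cons (a : ℕ+) (l : List ℕ+) : hPoly ↑(a::l) = X a * hPoly ↑l := by
  simp [hPoly]

lemma odot_single (a c : ℕ+) (s : List ℕ+) : odot [a] (c::s) = (a+c)::s := by
  simp [odot, List.getLastI]

lemma odot_cons_cons (a b : ℕ+) (t bb : List ℕ+) :
    odot (a::b::t) bb = a :: odot (b::t) bb := by
  cases bb with
  | nil => simp [odot]
  | cons c s => simp [odot, List.getLastI_eq_getLast?, List.getLast?]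

open MvPolynomial in
lemma Ssum_cons (a c : ℕ+) (t : List ℕ+) :
    Ssum (a::c::t) = -X a * Ssum (c::t) + Ssum ((a+c)::t) := by
  unfold Ssum
  rw [coarsenings, List.map_append, List.sum_append, List.map_map]
  congr 1
  have h : ∀ b : List ℕ+,
      ((-1 : MvPolynomial ℕ+ ℚ)^(a::b).length * hPoly ↑(a::b)) =
      (-X a) * ((-1)^b.length * hPoly ↑b) := by
    intro b; rw [hPoly_cons]; simp [pow_succ]; ring
  simp only [Function.comp_def, h]
  rw [List.sum_map_mul_left]

open MvPolynomial in
theorem Skey : ∀ (α : List ℕ+), α ≠ [] → ∀ (β : List ℕ+), β ≠ [] →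
    Ssum α * Ssum β = Ssum (α ++ β) - Ssum (odot α β)
  | [], h, _, _ => absurd rfl h
  | [a], _, [], h => absurd rfl h
  | [a], _, c::s, _ => by
      rw [odot_single]
      have h1 : Ssum [a] = -X a := by simp [Ssum, coarsenings, hPoly]
      rw [show [a] ++ c::s = a::c::s from rfl, Ssum_cons a c s, h1]; ring
  | a::b::t, _, β, hβ => by
      have IH1 := Skey (b::t) (List.cons_ne_nil _ _) β hβ
      have IH2 := Skey ((a+b)::t) (List.cons_ne_nil _ _) β hβ
      have hm : Ssum (a :: odot (b::t) β) =
          -X a * Ssum (odot (b::t) β) + Ssum (odot ((a+b)::t) β) := by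
        match t, β, hβ with
        | [], c::s, _ =>
          rw [odot_single b c s, odot_single (a+b) c s, Ssum_cons, add_assoc]
        | c'::t', β, hβ =>
          rw [odot_cons_cons b c' t' β, odot_cons_cons (a+b) c' t' β]
          exact Ssum_cons a b _
      rw [odot_cons_cons, show (a::b::t)++β = a::b::(t++β) from rfl,
        Ssum_cons a b (t++β), hm, Ssum_cons a b t]
      simp only [List.cons_append] at IH1 IH2
      linear_combination (-X a) * IH1 + IH2
  termination_by α _ _ _ => α.length
  decreasing_by all_goals simp

lemma odot_length (α β : List ℕ+) (hα : α ≠ []) (hβ : β ≠ []) :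
    α.length + β.length = (odot α β).length + 1 := by
  match α, β with
  | a::t, c::s =>
    simp [odot, List.length_dropLast]
    omega


/-- For compositions `α`, `β`:
`r_α · r_β = r_{α·β} + r_{α⊙β}`, where `α·β` is concatenation and `α⊙β` near
concatenation. -/
theorem ribbon_mul (α β : List ℕ+) (hα : α ≠ []) (hβ : β ≠ []) :
    ribbon α * ribbon β = ribbon (α ++ β) + ribbon (odot α β) := by
  have rdef : ∀ l : List ℕ+, ribbon l = (-1) ^ l.length * Ssum l := fun _ => rfl
  have hL : α.length + β.length = (odot α β).length + 1 := odot_length α β hα hβ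
  have hk := Skey α hα β hβ
  have hs : ((-1 : MvPolynomial ℕ+ ℚ)) ^ α.length * (-1) ^ β.length =
      -(-1) ^ (odot α β).length := by
    rw [← pow_add, hL, pow_succ]; ring
  rw [rdef, rdef, rdef, rdef, List.length_append, hL]
  linear_combination ((-1 : MvPolynomial ℕ+ ℚ)) ^ ((odot α β).length + 1) * hk +
    Ssum α * Ssum β * hs
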